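/- An R-module E is Σ-RD-injective (i.e., the direct sum E^{(I)} of I many copies of E is RD-injective for every set I) if and only if E^{(κ)} is RD-injective. -/

import Mathlib

universe u

/-- `A` is an RD-submodule of its ambient module: for every `r : R`,
`A ∩ r • M = r • A`. -/
def IsRDSubmodule {R : Type*} [Ring R] {M : Type*} [AddCommGroup M] [Module R M]
    (A : Submodule R M) : Prop :=
  ∀ (r : R) (x : M), x ∈ A → (∃ b : M, r • b = x) → ∃ a : M, a ∈ A ∧ r • a = x

/-- An RD-embedding is an injective linear map whose image is an RD-submodule
of its codomain. -/
def IsRDEmbedding {R : Type*} [Ring R] {M N : Type*} [AddCommGroup M] [Module R M]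
    [AddCommGroup N] [Module R N] (f : M →ₗ[R] N) : Prop :=
  Function.Injective f ∧ IsRDSubmodule (LinearMap.range f)

/-- `E` is RD-injective: every homomorphism `g : A → E` extends along every
RD-embedding `f : A → B`. -/
def RDInjective (R : Type u) [Ring R] (E : Type u) [AddCommGroup E] [Module R E] : Prop :=
  ∀ (A B : Type u) [AddCommGroup A] [Module R A] [AddCommGroup B] [Module R B]
    (f : A →ₗ[R] B), IsRDEmbedding f →
    ∀ g : A →ₗ[R] E, ∃ h : B →ₗ[R] E, h.comp f = g



open Classical in
/-- A finite homogeneous linear system with a distinguished variable: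
equations indexed by `κ`, auxiliary (witness) variables indexed by `ι`,
coefficients `t j k` on witness variables and `s j` on the distinguished one. -/
structure Sys (R : Type u) [Ring R] : Type (max u 1) where
  ι : Type
  κ : Type
  fι : Fintype ι
  fκ : Fintype κ
  t : κ → ι → R
  s : κ → R

attribute [instance] Sys.fι Sys.fκ

namespace Sys

variable {R : Type u} [Ring R] {M M₂ : Type*} [AddCommGroup M] [Module R M]
  [AddCommGroup M₂] [Module R M₂]

/-- Affine solution set with right hand sides `d`. -/
def asol (S : Sys R) (d : S.κ → M) : Set M :=
  {x | ∃ w : S.ι → M, ∀ j, (∑ k, S.t j k • w k) + S.s j • x = d j}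

/-- Homogeneous solution set. -/
def sol (S : Sys R) (M : Type*) [AddCommGroup M] [Module R M] : Set M :=
  S.asol (fun _ => (0 : M))

theorem asol_map (S : Sys R) {d : S.κ → M} {x : M} (f : M →ₗ[R] M₂)
    (hx : x ∈ S.asol d) : f x ∈ S.asol (fun j => f (d j)) := by
  obtain ⟨w, hw⟩ := hx
  refine ⟨fun k => f (w k), fun j => ?_⟩
  have := congrArg f (hw j)
  simpa [map_add, map_sum, map_smul] using this

theorem sol_map (S : Sys R) {x : M} (f : M →ₗ[R] M₂)
    (hx : x ∈ S.sol M) : f x ∈ S.sol M₂ := by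
  have := S.asol_map f hx
  simpa [sol, map_zero] using this

theorem zero_mem_sol (S : Sys R) : (0 : M) ∈ S.sol M :=
  ⟨0, fun j => by simp⟩

theorem sub_mem_sol (S : Sys R) {d : S.κ → M} {x y : M}
    (hx : x ∈ S.asol d) (hy : y ∈ S.asol d) : x - y ∈ S.sol M := by
  obtain ⟨w, hw⟩ := hx; obtain ⟨v, hv⟩ := hy
  refine ⟨fun k => w k - v k, fun j => ?_⟩
  have h : ((∑ k, S.t j k • w k) + S.s j • x) - ((∑ k, S.t j k • v k) + S.s j • y) = 0 := by
    rw [hw j, hv j, sub_self]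
  simp only [smul_sub, Finset.sum_sub_distrib]
  rw [← h]; abel

theorem add_mem_asol (S : Sys R) {d : S.κ → M} {x h : M}
    (hx : x ∈ S.asol d) (hh : h ∈ S.sol M) : x + h ∈ S.asol d := by
  obtain ⟨w, hw⟩ := hx; obtain ⟨v, hv⟩ := hh
  refine ⟨fun k => w k + v k, fun j => ?_⟩
  have h1 := hw j; have h2 := hv j
  simp only [smul_add, Finset.sum_add_distrib] at *
  calc (∑ k, S.t j k • w k) + (∑ k, S.t j k • v k) + (S.s j • x + S.s j • h)
      = ((∑ k, S.t j k • w k) + S.s j • x) + ((∑ k, S.t j k • v k) + S.s j • h) := by abel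
    _ = d j := by rw [h1, h2]; simp

theorem neg_mem_sol (S : Sys R) {x : M} (hx : x ∈ S.sol M) : -x ∈ S.sol M := by
  simpa using S.sub_mem_sol S.zero_mem_sol hx

/-- Conjunction of two systems. -/
def and (S T : Sys R) : Sys R where
  ι := S.ι ⊕ T.ι
  κ := S.κ ⊕ T.κ
  fι := inferInstance
  fκ := inferInstance
  t := fun j k =>
    match j, k with
    | .inl j, .inl k => S.t j k
    | .inr j, .inr k => T.t j k
    | _, _ => 0
  s := Sum.elim S.s T.s

theorem mem_asol_and_iff (S T : Sys R) (d : S.κ → M) (e : T.κ → M) (x : M) :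
    x ∈ (S.and T).asol (Sum.elim d e) ↔ x ∈ S.asol d ∧ x ∈ T.asol e := by
  constructor
  · rintro ⟨w, hw⟩
    constructor
    · refine ⟨fun k => w (.inl k), fun j => ?_⟩
      have := hw (.inl j)
      unfold Sys.and at this
      simpa [Sys.and, Fintype.sum_sum_type] using this
    · refine ⟨fun k => w (.inr k), fun j => ?_⟩
      have := hw (.inr j)
      unfold Sys.and at this
      simpa [Sys.and, Fintype.sum_sum_type] using this
  · rintro ⟨⟨w, hw⟩, ⟨v, hv⟩⟩
    refine ⟨Sum.elim w v, fun j => ?_⟩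
    rcases j with j | j
    · unfold Sys.and; simpa [Sys.and, Fintype.sum_sum_type] using hw j
    · unfold Sys.and; simpa [Sys.and, Fintype.sum_sum_type] using hv j

theorem sol_and (S T : Sys R) : (S.and T).sol M = S.sol M ∩ T.sol M := by
  ext x
  have h0 : (Sum.elim (fun _ => (0:M)) (fun _ => (0:M)) : S.κ ⊕ T.κ → M) = fun _ => 0 := by
    funext j; cases j <;> rfl
  have h := mem_asol_and_iff (M := M) S T (fun _ => 0) (fun _ => 0) x
  rw [h0] at h
  exact h.trans (Set.mem_inter_iff _ _ _).symm

end Sys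

section P2
variable {R : Type u} [Ring R] {E : Type u} [AddCommGroup E] [Module R E] {I : Type u}

/-- The canonical inclusion of the direct sum into the product. -/
noncomputable def incl (R : Type u) [Ring R] (E : Type u) [AddCommGroup E] [Module R E]
    (I : Type u) : DirectSum I (fun _ => E) →ₗ[R] (I → E) :=
  LinearMap.pi (fun i => DirectSum.component R I (fun _ => E) i)

theorem incl_apply (z : DirectSum I (fun _ => E)) (i : I) : incl R E I z i = z i := rfl

theorem incl_injective : Function.Injective (incl R E I) := by
  intro x y h
  exact DirectSum.ext (fun i => congrFun h i)
end P2

section P2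
variable {R : Type u} [Ring R] {E : Type u} [AddCommGroup E] [Module R E] {I : Type u}

namespace Sys

variable {M : Type*} [AddCommGroup M] [Module R M]

theorem add_mem_sol (S : Sys R) {x y : M} (hx : x ∈ S.sol M) (hy : y ∈ S.sol M) :
    x + y ∈ S.sol M :=
  S.add_mem_asol hx hy

theorem mem_sol_pi_iff (S : Sys R) (x : I → E) :
    x ∈ S.sol (I → E) ↔ ∀ i, x i ∈ S.sol E := by
  constructor
  · intro hx i
    exact S.sol_map (LinearMap.proj i) hx
  · intro h
    choose w hw using h
    refine ⟨fun k i => w i k, fun j => ?_⟩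
    funext i
    have := hw i j
    simpa [Finset.sum_apply] using this

theorem mem_sol_directSum_iff (S : Sys R) (z : DirectSum I (fun _ => E)) :
    z ∈ S.sol (DirectSum I (fun _ => E)) ↔ ∀ i, z i ∈ S.sol E := by
  classical
  constructor
  · intro hz i
    exact S.sol_map (DirectSum.component R I (fun _ => E) i) hz
  · intro h
    rw [← DirectSum.sum_support_of (β := fun _ => E) z]
    refine Finset.sum_induction _ (fun y => y ∈ S.sol _) (fun a b ha hb => S.add_mem_sol ha hb)
      S.zero_mem_sol (fun i _ => ?_)
    exact S.sol_map (DirectSum.lof R I (fun _ => E) i) (h i)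

theorem sol_mono_directSum (S T : Sys R) (h : S.sol E ⊆ T.sol E)
    {z : DirectSum I (fun _ => E)} (hz : z ∈ S.sol (DirectSum I (fun _ => E))) :
    z ∈ T.sol (DirectSum I (fun _ => E)) := by
  rw [mem_sol_directSum_iff] at hz ⊢
  exact fun i => h (hz i)

end Sys
end P2
section P3
variable {R : Type u} [Ring R] {E : Type u} [AddCommGroup E] [Module R E] {I : Type u}

theorem rdInjective_of_retract {M E' : Type u} [AddCommGroup M] [Module R M]
    [AddCommGroup E'] [Module R E'] (hM : RDInjective R M)
    (i : E' →ₗ[R] M) (p : M →ₗ[R] E') (hp : ∀ x, p (i x) = x) : RDInjective R E' := by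
  intro A B _ _ _ _ f hf g
  obtain ⟨h, hh⟩ := hM A B f hf (i.comp g)
  refine ⟨p.comp h, ?_⟩
  ext a
  have := LinearMap.congr_fun hh a
  simp only [LinearMap.comp_apply] at this ⊢
  rw [this, hp]

theorem rdInjective_pi (hE : RDInjective R E) (T : Type u) : RDInjective R (T → E) := by
  intro A B _ _ _ _ f hf g
  choose h hh using fun t : T => hE A B f hf ((LinearMap.proj t).comp g)
  refine ⟨LinearMap.pi h, LinearMap.ext fun a => ?_⟩
  funext t
  have := LinearMap.congr_fun (hh t) a
  simpa using this

theorem isRDEmbedding_incl : IsRDEmbedding (incl R E I) := by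
  classical
  refine ⟨incl_injective, ?_⟩
  rintro r x hx ⟨b, hb⟩
  obtain ⟨u, rfl⟩ := hx
  set u' : DirectSum I (fun _ => E) :=
    DirectSum.mk (fun _ => E) (DFinsupp.support u) (fun i => b i.1) with hu'
  have key : r • u' = u := by
    refine DirectSum.ext (fun i => ?_)
    show (r • u') i = u i
    rw [DFinsupp.smul_apply]
    by_cases hi : i ∈ DFinsupp.support u
    · have h1 : u' i = b i := by
        rw [hu']
        exact DirectSum.mk_apply_of_mem hi
      rw [h1]
      have := congrFun hb i
      simpa [incl_apply] using this
    · have h1 : u' i = 0 := by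
        rw [hu']
        exact DirectSum.mk_apply_of_notMem hi
      have h2 : u i = 0 := DFinsupp.notMem_support_iff.1 hi
      rw [h1, h2, smul_zero]
  exact ⟨incl R E I u', ⟨u', rfl⟩, by rw [← map_smul, key]⟩

end P3
section P4
variable {R : Type u} [Ring R] {E : Type u} [AddCommGroup E] [Module R E]

/-- No strictly descending chain of homogeneous solution sets in `E`. -/
def SolDCC (R : Type u) [Ring R] (E : Type u) [AddCommGroup E] [Module R E] : Prop :=
  ¬ ∃ G : ℕ → Sys R, ∀ n, (G (n+1)).sol E ⊂ (G n).sol E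

theorem solDCC_of_rdInjective {J : Type u} [Infinite J]
    (hEJ : RDInjective R (DirectSum J (fun _ => E))) : SolDCC R E := by
  classical
  rintro ⟨G, hG⟩
  have mono : ∀ m n : ℕ, m ≤ n → (G n).sol E ⊆ (G m).sol E := by
    intro m n hmn
    induction n with
    | zero => rw [Nat.le_zero.1 hmn]
    | succ n ih =>
      rcases Nat.lt_or_ge m (n+1) with h | h
      · exact ((hG n).1).trans (ih (Nat.lt_succ_iff.1 h))
      · rw [Nat.le_antisymm hmn h]
  have ha : ∀ n, ∃ x, x ∈ (G n).sol E ∧ x ∉ (G (n+1)).sol E := by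
    intro n
    obtain ⟨x, hx1, hx2⟩ := Set.exists_of_ssubset (hG n)
    exact ⟨x, hx1, hx2⟩
  choose a haS haN using ha
  let f : ℕ ↪ J := Infinite.natEmbedding J
  obtain ⟨p, hp⟩ := hEJ _ _ (incl R E J) isRDEmbedding_incl LinearMap.id
  set A : J → E := Function.extend f a (fun _ => 0) with hA
  set y : ℕ → DirectSum J (fun _ => E) :=
    fun n => ∑ m ∈ Finset.range (n+1), DirectSum.lof R J (fun _ => E) (f m) (a m) with hy
  have ycoord : ∀ (n : ℕ) (j : J), (y n) j
      = ∑ m ∈ Finset.range (n+1), (DirectSum.lof R J (fun _ => E) (f m) (a m)) j := by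
    intro n j
    rw [hy]
    exact DFinsupp.finset_sum_apply _ _ _
  have ycoord_in : ∀ (n m : ℕ), m ≤ n → (y n) (f m) = a m := by
    intro n m hmn
    rw [ycoord]
    rw [Finset.sum_eq_single m]
    · simp [DirectSum.lof_eq_of, DirectSum.of_apply]
    · intro m' _ hm'
      have : f m' ≠ f m := fun h => hm' (f.injective h)
      simp [DirectSum.lof_eq_of, DirectSum.of_apply, this]
    · intro h
      exact absurd (Finset.mem_range.2 (Nat.lt_succ_of_le hmn)) h
  have ycoord_out : ∀ (n : ℕ) (j : J), (¬ ∃ m, m ≤ n ∧ f m = j) → (y n) j = 0 := by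
    intro n j hj
    rw [ycoord]
    refine Finset.sum_eq_zero (fun m hm => ?_)
    have : f m ≠ j := fun h => hj ⟨m, Nat.lt_succ_iff.1 (Finset.mem_range.1 hm), h⟩
    simp [DirectSum.lof_eq_of, DirectSum.of_apply, this]
  have claim1 : ∀ n, A - incl R E J (y n) ∈ (G (n+1)).sol (J → E) := by
    intro n
    rw [Sys.mem_sol_pi_iff]
    intro j
    show A j - (incl R E J (y n)) j ∈ _
    rw [incl_apply]
    by_cases hj : ∃ m, f m = j
    · obtain ⟨m, rfl⟩ := hj
      have hAj : A (f m) = a m := by rw [hA]; exact f.injective.extend_apply _ _ _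
      rcases le_or_gt m n with h | h
      · rw [hAj, ycoord_in n m h, sub_self]
        exact (G (n+1)).zero_mem_sol
      · have : (y n) (f m) = 0 := by
          refine ycoord_out n (f m) ?_
          rintro ⟨m', hm', he⟩
          exact absurd (f.injective he ▸ hm') (Nat.not_le.2 h)
        rw [hAj, this, sub_zero]
        exact mono (n+1) m h (haS m)
    · have hAj : A j = 0 := by rw [hA]; exact Function.extend_apply' _ _ _ hj
      have hyj : (y n) j = 0 := ycoord_out n j (fun ⟨m, _, he⟩ => hj ⟨m, he⟩)
      rw [hAj, hyj, sub_zero]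
      exact (G (n+1)).zero_mem_sol
  have hpincl : ∀ z, p (incl R E J z) = z := fun z => LinearMap.congr_fun hp z
  have claim2 : ∀ n, p A - y n ∈ (G (n+1)).sol (DirectSum J (fun _ => E)) := by
    intro n
    have := (G (n+1)).sol_map p (claim1 n)
    rwa [map_sub, hpincl] at this
  have hfin : {n : ℕ | f n ∈ DFinsupp.support (p A)}.Finite := by
    refine Set.Finite.preimage f.injective.injOn (DFinsupp.support (p A)).finite_toSet
  obtain ⟨n₀, hn₀⟩ := (hfin.infinite_compl).nonempty
  have hcoord := (G (n₀+1)).sol_map (DirectSum.component R J (fun _ => E) (f n₀)) (claim2 n₀)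
  have e1 : (p A) (f n₀) = 0 := DFinsupp.notMem_support_iff.1 hn₀
  have e2 : (y n₀) (f n₀) = a n₀ := ycoord_in n₀ n₀ le_rfl
  have : -(a n₀) ∈ (G (n₀+1)).sol E := by
    have : (p A - y n₀) (f n₀) = -(a n₀) := by
      rw [DFinsupp.sub_apply, e1, e2, zero_sub]
    rwa [← this]
  exact haN n₀ (by simpa using (G (n₀+1)).neg_mem_sol this)
end P4
section P5
variable {R : Type u} [Ring R] {E : Type u} [AddCommGroup E] [Module R E] {I : Type u}
variable {P : Type*} [AddCommGroup P] [Module R P]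
variable {N : Type*} [AddCommGroup N] [Module R N]

theorem rho_congr {C : Submodule R P} (ρ : C →ₗ[R] N) {v v' : P} (h : v ∈ C) (h' : v' ∈ C)
    (e : v = v') : ρ ⟨v, h⟩ = ρ ⟨v', h'⟩ := by cases e; rfl

@[simp] theorem Sys.and_t_inl_inl {S T : Sys R} (j : S.κ) (k : S.ι) :
    (S.and T).t (.inl j) (.inl k) = S.t j k := rfl
@[simp] theorem Sys.and_t_inl_inr {S T : Sys R} (j : S.κ) (k : T.ι) :
    (S.and T).t (.inl j) (.inr k) = 0 := rfl
@[simp] theorem Sys.and_t_inr_inl {S T : Sys R} (j : T.κ) (k : S.ι) :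
    (S.and T).t (.inr j) (.inl k) = 0 := rfl
@[simp] theorem Sys.and_t_inr_inr {S T : Sys R} (j : T.κ) (k : T.ι) :
    (S.and T).t (.inr j) (.inr k) = T.t j k := rfl
@[simp] theorem Sys.and_s_inl {S T : Sys R} (j : S.κ) : (S.and T).s (.inl j) = S.s j := rfl
@[simp] theorem Sys.and_s_inr {S T : Sys R} (j : T.κ) : (S.and T).s (.inr j) = T.s j := rfl

theorem Sys.and_sum_inl {M : Type*} [AddCommGroup M] [Module R M] (S T : Sys R)
    (w : S.ι ⊕ T.ι → M) (j : S.κ) :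
    (∑ k, (S.and T).t (Sum.inl j) k • w k) = ∑ k, S.t j k • w (Sum.inl k) := by
  have h := Fintype.sum_sum_type (fun k : S.ι ⊕ T.ι => (S.and T).t (Sum.inl j) k • w k)
  simp only [Sys.and_t_inl_inl, Sys.and_t_inl_inr, zero_smul, Finset.sum_const_zero,
    add_zero] at h
  exact h

theorem Sys.and_sum_inr {M : Type*} [AddCommGroup M] [Module R M] (S T : Sys R)
    (w : S.ι ⊕ T.ι → M) (j : T.κ) :
    (∑ k, (S.and T).t (Sum.inr j) k • w k) = ∑ k, T.t j k • w (Sum.inr k) := by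
  have h := Fintype.sum_sum_type (fun k : S.ι ⊕ T.ι => (S.and T).t (Sum.inr j) k • w k)
  simp only [Sys.and_t_inr_inl, Sys.and_t_inr_inr, zero_smul, Finset.sum_const_zero,
    zero_add] at h
  exact h

/-- A finite "divisibility condition" on the point `p` over the partially-defined map with
domain `C`. -/
structure Cond (R : Type u) [Ring R] {P : Type*} [AddCommGroup P] [Module R P]
    (C : Submodule R P) (p : P) : Type _ where
  S : Sys R
  q : S.ι → P
  mem : ∀ j, (∑ k, S.t j k • q k) + S.s j • p ∈ C

namespace Cond

variable {C : Submodule R P} {p : P}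

def dvec (c : Cond R C p) (ρ : C →ₗ[R] N) : c.S.κ → N :=
  fun j => ρ ⟨_, c.mem j⟩

/-- `x` realizes the condition `c`. -/
def Sat (c : Cond R C p) (ρ : C →ₗ[R] N) (x : N) : Prop :=
  x ∈ c.S.asol (c.dvec ρ)

/-- Conjunction of conditions. -/
def and (c d : Cond R C p) : Cond R C p where
  S := c.S.and d.S
  q := Sum.elim c.q d.q
  mem := by
    rintro (j | j)
    · rw [Sys.and_sum_inl]
      simpa using c.mem j
    · rw [Sys.and_sum_inr]
      simpa using d.mem j

theorem dvec_and (c d : Cond R C p) (ρ : C →ₗ[R] N) :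
    (c.and d).dvec ρ = Sum.elim (c.dvec ρ) (d.dvec ρ) := by
  funext j
  rcases j with j | j
  · refine rho_congr ρ _ _ ?_
    show (∑ k, (c.S.and d.S).t (Sum.inl j) k • (Sum.elim c.q d.q) k)
        + c.S.s j • p = (∑ k, c.S.t j k • c.q k) + c.S.s j • p
    rw [Sys.and_sum_inl]
    simp
  · refine rho_congr ρ _ _ ?_
    show (∑ k, (c.S.and d.S).t (Sum.inr j) k • (Sum.elim c.q d.q) k)
        + d.S.s j • p = (∑ k, d.S.t j k • d.q k) + d.S.s j • p
    rw [Sys.and_sum_inr]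
    simp

theorem sat_and_iff (c d : Cond R C p) (ρ : C →ₗ[R] N) (x : N) :
    (c.and d).Sat ρ x ↔ c.Sat ρ x ∧ d.Sat ρ x := by
  unfold Sat
  rw [dvec_and]
  exact Sys.mem_asol_and_iff c.S d.S _ _ x

end Cond

/-- The invariant: every finite linear system whose combinations land in `C` can be solved
in `N` compatibly with `ρ`. -/
def INV {C : Submodule R P} (ρ : C →ₗ[R] N) : Prop :=
  ∀ (S : Sys R) (q : S.ι → P) (h : ∀ j, (∑ k, S.t j k • q k) ∈ C),
    ∃ x : S.ι → N, ∀ j, (∑ k, S.t j k • x k) = ρ ⟨∑ k, S.t j k • q k, h j⟩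

theorem sum_elim_aux {M : Type*} [AddCommGroup M] [Module R M] {ι : Type} [Fintype ι]
    (t : ι → R) (s' : R) (w : ι ⊕ PUnit → M) :
    (∑ k : ι ⊕ PUnit, (Sum.elim t (fun _ => s')) k • w k)
      = (∑ k, t k • w (.inl k)) + s' • w (.inr PUnit.unit) := by
  rw [Fintype.sum_sum_type]
  simp

theorem sat_of_inv {C : Submodule R P} {ρ : C →ₗ[R] N} {p : P} (hinv : INV ρ)
    (c : Cond R C p) : ∃ x, c.Sat ρ x := by
  let S' : Sys R :=
    { ι := c.S.ι ⊕ PUnit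
      κ := c.S.κ
      fι := inferInstance
      fκ := inferInstance
      t := fun j => Sum.elim (c.S.t j) (fun _ => c.S.s j)
      s := c.S.s }
  let q' : S'.ι → P := Sum.elim c.q (fun _ => p)
  have hid : ∀ j, (∑ k, S'.t j k • q' k) = (∑ k, c.S.t j k • c.q k) + c.S.s j • p := by
    intro j
    exact sum_elim_aux _ _ _
  have hC : ∀ j, (∑ k, S'.t j k • q' k) ∈ C := fun j => (hid j) ▸ c.mem j
  obtain ⟨x, hx⟩ := hinv S' q' hC
  refine ⟨x (.inr PUnit.unit), fun k => x (.inl k), fun j => ?_⟩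
  have h1 := hx j
  rw [sum_elim_aux] at h1
  rw [h1]
  exact rho_congr ρ _ _ (hid j)

theorem exists_realize (hdcc : SolDCC R E) {C : Submodule R P}
    (ρ : C →ₗ[R] DirectSum I (fun _ => E)) (p : P) (hinv : INV ρ) :
    ∃ x₀, ∀ c : Cond R C p, c.Sat ρ x₀ := by
  let triv : Cond R C p :=
    { S := ⟨Empty, Empty, inferInstance, inferInstance, fun j _ => 0, fun _ => 0⟩
      q := fun k => k.elim
      mem := fun j => j.elim }
  have hmin : ∃ cm : Cond R C p, ∀ c : Cond R C p, ¬ ((c.S).sol E ⊂ (cm.S).sol E) := by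
    by_contra h
    push_neg at h
    choose nxt hnxt using h
    let seq : ℕ → Cond R C p := fun n => Nat.rec triv (fun _ cn => cn.and (nxt cn)) n
    refine hdcc ⟨fun n => (seq n).S, fun n => ?_⟩
    have hb := hnxt (seq n)
    show ((seq n).S.and (nxt (seq n)).S).sol E ⊂ (seq n).S.sol E
    rw [Sys.sol_and, Set.ssubset_def]
    refine ⟨Set.inter_subset_left, fun hsub => ?_⟩
    rw [Set.ssubset_def] at hb
    exact hb.2 (fun x hx => (hsub hx).2)
  obtain ⟨cm, hcm⟩ := hmin
  obtain ⟨x₀, hx₀⟩ := sat_of_inv hinv cm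
  refine ⟨x₀, fun c => ?_⟩
  obtain ⟨y, hy⟩ := sat_of_inv hinv (c.and cm)
  have hyc : c.Sat ρ y := ((Cond.sat_and_iff c cm ρ y).1 hy).1
  have hycm : cm.Sat ρ y := ((Cond.sat_and_iff c cm ρ y).1 hy).2
  have h2 : (cm.S).sol E ⊆ (c.S).sol E := by
    have hno := hcm (c.and cm)
    rw [Set.ssubset_def] at hno
    push_neg at hno
    have h1 : ((c.and cm).S).sol E ⊆ (cm.S).sol E := by
      rw [show (c.and cm).S = c.S.and cm.S from rfl, Sys.sol_and]
      exact Set.inter_subset_right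
    have h3 := hno h1
    rw [show (c.and cm).S = c.S.and cm.S from rfl, Sys.sol_and] at h3
    exact fun x hx => (h3 hx).1
  have hd : x₀ - y ∈ (cm.S).sol (DirectSum I fun _ => E) := Sys.sub_mem_sol _ hx₀ hycm
  have hd' : x₀ - y ∈ (c.S).sol (DirectSum I fun _ => E) := Sys.sol_mono_directSum _ _ h2 hd
  have he : y + (x₀ - y) = x₀ := by abel
  exact he ▸ Sys.add_mem_asol _ hyc hd'

end P5
section P6
variable {R : Type u} [Ring R] {E : Type u} [AddCommGroup E] [Module R E]

theorem exists_retraction (hdcc : SolDCC R E) (I : Type u) :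
    ∃ ρ : (I → E) →ₗ[R] DirectSum I (fun _ => E), ∀ z, ρ (incl R E I z) = z := by
  classical
  set N := DirectSum I (fun _ => E) with hN
  set ι₀ : N →ₗ[R] (I → E) := incl R E I with hι₀
  set s : Set ((I → E) →ₗ.[R] N) :=
    {φ | LinearMap.range ι₀ ≤ φ.domain ∧ (∀ z (h : ι₀ z ∈ φ.domain), φ ⟨ι₀ z, h⟩ = z) ∧
      INV φ.toFun} with hs
  -- the base element
  let e : N ≃ₗ[R] LinearMap.range ι₀ := LinearEquiv.ofInjective ι₀ incl_injective
  let φ₀ : (I → E) →ₗ.[R] N := ⟨LinearMap.range ι₀, e.symm.toLinearMap⟩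
  have hφ₀val : ∀ (z : N) (h : ι₀ z ∈ LinearMap.range ι₀), φ₀ ⟨ι₀ z, h⟩ = z := by
    intro z h
    have h1 : (⟨ι₀ z, h⟩ : LinearMap.range ι₀) = e z :=
      Subtype.ext (LinearEquiv.ofInjective_apply ι₀ z).symm
    show e.symm ⟨ι₀ z, h⟩ = z
    rw [h1, e.symm_apply_apply]
  have hφ₀ : φ₀ ∈ s := by
    refine ⟨le_rfl, hφ₀val, ?_⟩
    intro S q hC
    set u : S.κ → N := fun j => e.symm ⟨_, hC j⟩ with hu
    have hιu : ∀ j, ι₀ (u j) = ∑ k, S.t j k • q k := by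
      intro j
      have h1 : (↑(e (u j)) : I → E) = ι₀ (u j) := LinearEquiv.ofInjective_apply ι₀ (u j)
      have h2 : e (u j) = ⟨_, hC j⟩ := e.apply_symm_apply _
      rw [← h1, h2]
    set T₀ : Finset I := Finset.univ.biUnion (fun j => DFinsupp.support (u j)) with hT₀
    refine ⟨fun k => DirectSum.mk (fun _ => E) T₀ (fun i => q k i.1), fun j => ?_⟩
    show (∑ k, S.t j k • DirectSum.mk (fun _ => E) T₀ (fun i => q k i.1)) = u j
    refine DirectSum.ext (fun i => ?_)
    show (∑ k, S.t j k • DirectSum.mk (fun _ => E) T₀ (fun i => q k i.1)) i = u j i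
    rw [DFinsupp.finset_sum_apply]
    by_cases hi : i ∈ T₀
    · have hcoord : ∀ k, (S.t j k • DirectSum.mk (fun _ => E) T₀ (fun i => q k i.1)) i
          = S.t j k • q k i := by
        intro k
        rw [DFinsupp.smul_apply, DirectSum.mk_apply_of_mem hi]
      rw [Finset.sum_congr rfl (fun k _ => hcoord k)]
      have := congrFun (hιu j) i
      rw [incl_apply] at this
      rw [this]
      simp [Finset.sum_apply]
    · have hcoord : ∀ k, (S.t j k • DirectSum.mk (fun _ => E) T₀ (fun i => q k i.1)) i = 0 := by
        intro k
        rw [DFinsupp.smul_apply, DirectSum.mk_apply_of_notMem hi, smul_zero]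
      rw [Finset.sum_congr rfl (fun k _ => hcoord k), Finset.sum_const_zero]
      by_contra hne
      exact hi (hT₀ ▸ Finset.mem_biUnion.2 ⟨j, Finset.mem_univ j,
        DFinsupp.mem_support_iff.2 (fun h0 => (Ne.symm hne) h0)⟩)
  -- chains have upper bounds in s
  have hchain : ∀ c ⊆ s, IsChain (· ≤ ·) c → ∀ y ∈ c, ∃ ub ∈ s, ∀ z ∈ c, z ≤ ub := by
    intro c hcs hc y hy
    have hdir : DirectedOn (· ≤ ·) c := hc.directedOn
    refine ⟨LinearPMap.sSup c hdir, ?_, fun z hz => LinearPMap.le_sSup hdir hz⟩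
    have hdom : ∀ f ∈ c, f.domain ≤ (LinearPMap.sSup c hdir).domain :=
      fun f hf => (LinearPMap.le_sSup hdir hf).1
    refine ⟨le_trans (hcs hy).1 (hdom y hy), ?_, ?_⟩
    · intro z h
      have hzy : ι₀ z ∈ y.domain := (hcs hy).1 ⟨z, rfl⟩
      have := (LinearPMap.le_sSup hdir hy).2 (x := ⟨ι₀ z, hzy⟩) (y := ⟨ι₀ z, h⟩) rfl
      rw [← this]
      exact (hcs hy).2.1 z hzy
    · intro S q hC
      have hdirim : DirectedOn (· ≤ ·) (LinearPMap.domain '' c) := by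
        rintro a ⟨f, hf, rfl⟩ b ⟨g, hg, rfl⟩
        obtain ⟨h, hh, h1, h2⟩ := hdir f hf g hg
        exact ⟨h.domain, Set.mem_image_of_mem _ hh, h1.1, h2.1⟩
      have hmem : ∀ j, ∃ f ∈ c, (∑ k, S.t j k • q k) ∈ f.domain := by
        intro j
        have : (∑ k, S.t j k • q k) ∈ sSup (LinearPMap.domain '' c) := hC j
        obtain ⟨D, ⟨f, hf, rfl⟩, hD⟩ :=
          (Submodule.mem_sSup_of_directed ⟨_, Set.mem_image_of_mem _ hy⟩ hdirim).1 this
        exact ⟨f, hf, hD⟩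
      choose F hF hvF using hmem
      have : Nonempty c := ⟨⟨y, hy⟩⟩
      obtain ⟨z, hz⟩ := (directedOn_iff_directed.1 hdir).finset_le
        (Finset.univ.image (fun j => (⟨F j, hF j⟩ : c)))
      have hFz : ∀ j, F j ≤ z.1 :=
        fun j => hz _ (Finset.mem_image_of_mem _ (Finset.mem_univ j))
      have hvz : ∀ j, (∑ k, S.t j k • q k) ∈ z.1.domain := fun j => (hFz j).1 (hvF j)
      obtain ⟨x, hx⟩ := (hcs z.2).2.2 S q hvz
      refine ⟨x, fun j => ?_⟩
      rw [hx j]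
      exact (LinearPMap.le_sSup hdir z.2).2 rfl
  obtain ⟨m, -, hmax⟩ := zorn_le_nonempty₀ s hchain φ₀ hφ₀
  have hms : m ∈ s := hmax.1
  have htop : m.domain = ⊤ := by
    by_contra hne
    have : ∃ p, p ∉ m.domain := by
      by_contra hall
      push_neg at hall
      exact hne (Submodule.eq_top_iff'.2 hall)
    obtain ⟨p, hp⟩ := this
    obtain ⟨x₀, hx₀⟩ := exists_realize hdcc m.toFun p hms.2.2
    -- build the one-step extension
    set π : (↥m.domain × R) →ₗ[R] (I → E) :=
      m.domain.subtype.comp (LinearMap.fst R _ _)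
        + (LinearMap.toSpanSingleton R _ p).comp (LinearMap.snd R _ _) with hπ
    set l : (↥m.domain × R) →ₗ[R] N :=
      m.toFun.comp (LinearMap.fst R _ _)
        + (LinearMap.toSpanSingleton R _ x₀).comp (LinearMap.snd R _ _) with hl
    have hπapp : ∀ (z : ↥m.domain × R), π z = (z.1 : I → E) + z.2 • p := fun z => rfl
    have hlapp : ∀ (z : ↥m.domain × R), l z = m.toFun z.1 + z.2 • x₀ := fun z => rfl
    have hsingle : ∀ (r : R) (h : r • p ∈ m.domain), r • x₀ = m.toFun ⟨r • p, h⟩ := by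
      intro r h
      have hmem0 : (∑ k : Empty, (0 : R) • (Empty.elim k : I → E)) + r • p ∈ m.domain := by
        simpa using h
      set cnd : Cond R m.domain p :=
        ⟨⟨Empty, PUnit, inferInstance, inferInstance, fun _ k => 0, fun _ => r⟩,
          fun k => k.elim, fun _ => hmem0⟩ with hcnd
      obtain ⟨w, hw⟩ := hx₀ cnd
      have hwu := hw PUnit.unit
      have h0 : (∑ k, cnd.S.t PUnit.unit k • w k) = 0 :=
        Finset.sum_eq_zero (fun k _ => by
          rw [show cnd.S.t PUnit.unit k = (0 : R) from rfl, zero_smul])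
      rw [h0, zero_add] at hwu
      rw [hwu]
      refine rho_congr m.toFun _ _ ?_
      have h1 : (∑ k, cnd.S.t PUnit.unit k • cnd.q k) = 0 :=
        Finset.sum_eq_zero (fun k _ => by
          rw [show cnd.S.t PUnit.unit k = (0 : R) from rfl, zero_smul])
      rw [h1, zero_add]
    have hker : LinearMap.ker π ≤ LinearMap.ker l := by
      rintro ⟨c, r⟩ hz
      have hz' : (c : I → E) + r • p = 0 := hz
      have hrp : r • p ∈ m.domain := by
        have h2 : r • p = -(c : I → E) := by
          have := congrArg (fun x => x - (c : I → E)) hz'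
          simpa [add_sub_cancel_left] using this
        rw [h2]
        exact neg_mem c.2
      have : l (c, r) = m.toFun c + m.toFun ⟨r • p, hrp⟩ := by
        rw [hlapp, hsingle r hrp]
      rw [LinearMap.mem_ker, this, ← map_add]
      have : (c + ⟨r • p, hrp⟩ : ↥m.domain) = 0 := by
        apply Subtype.ext
        show (c : I → E) + r • p = 0
        exact hz'
      rw [this, map_zero]
    set h' : ↥(LinearMap.range π) →ₗ[R] N :=
      ((LinearMap.ker π).liftQ l hker).comp (LinearMap.quotKerEquivRange π).symm.toLinearMap
      with hh'
    have hkey : ∀ (z : ↥m.domain × R) (hmem : π z ∈ LinearMap.range π),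
        h' ⟨π z, hmem⟩ = l z := by
      intro z hmem
      rw [hh']
      simp only [LinearMap.comp_apply, LinearEquiv.coe_toLinearMap]
      rw [LinearMap.quotKerEquivRange_symm_apply_image]
      simp
    set ψ : (I → E) →ₗ.[R] N := ⟨LinearMap.range π, h'⟩ with hψ
    have hmem_of_dom : ∀ x ∈ m.domain, x ∈ LinearMap.range π := by
      intro x hx
      refine ⟨(⟨x, hx⟩, 0), ?_⟩
      rw [hπapp]
      simp
    have hle : m ≤ ψ := by
      refine ⟨hmem_of_dom, ?_⟩
      intro x y hxy
      have hyval : (y : I → E) = π (⟨x.1, x.2⟩, 0) := by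
        rw [hπapp]
        simp [← hxy]
      have : y = ⟨π ((⟨x.1, x.2⟩ : ↥m.domain), 0), LinearMap.mem_range_self _ _⟩ :=
        Subtype.ext hyval
      show m.toFun x = h' y
      rw [this, hkey]
      rw [hlapp]
      simp
    have hψs : ψ ∈ s := by
      refine ⟨le_trans hms.1 hle.1, ?_, ?_⟩
      · intro z h
        have hzm : ι₀ z ∈ m.domain := hms.1 ⟨z, rfl⟩
        have := hle.2 (x := ⟨ι₀ z, hzm⟩) (y := ⟨ι₀ z, h⟩) rfl
        rw [← this]
        exact hms.2.1 z hzm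
      · intro S q hC
        have hch : ∀ j, ∃ z : ↥m.domain × R, π z = ∑ k, S.t j k • q k :=
          fun j => hC j
        choose zc hzc using hch
        have hmemc : ∀ j, (∑ k, S.t j k • q k) + (-(zc j).2) • p ∈ m.domain := by
          intro j
          have : (∑ k, S.t j k • q k) + (-(zc j).2) • p = ((zc j).1 : I → E) := by
            rw [← hzc j, hπapp, neg_smul]
            abel
          rw [this]
          exact (zc j).1.2
        set cnd : Cond R m.domain p :=
          ⟨⟨S.ι, S.κ, S.fι, S.fκ, S.t, fun j => -(zc j).2⟩, q, hmemc⟩ with hcnd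
        obtain ⟨w, hw⟩ := hx₀ cnd
        refine ⟨w, fun j => ?_⟩
        have hdv : cnd.dvec m.toFun j = m.toFun (zc j).1 := by
          unfold Cond.dvec
          refine rho_congr m.toFun _ _ ?_
          show (∑ k, S.t j k • q k) + (-(zc j).2) • p = ((zc j).1 : I → E)
          rw [← hzc j, hπapp, neg_smul]
          abel
        have hwj := hw j
        rw [hdv] at hwj
        have hwj' : (∑ k, S.t j k • w k) + (-(zc j).2) • x₀ = m.toFun (zc j).1 := hwj
        have hw2 : (∑ k, S.t j k • w k) = m.toFun (zc j).1 + (zc j).2 • x₀ := by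
          rw [neg_smul] at hwj'
          rw [← hwj']
          abel
        show (∑ k, S.t j k • w k) = h' ⟨∑ k, S.t j k • q k, hC j⟩
        have heq : (⟨∑ k, S.t j k • q k, hC j⟩ : ↥(LinearMap.range π))
            = ⟨π (zc j), LinearMap.mem_range_self _ _⟩ := Subtype.ext (hzc j).symm
        rw [heq, hkey, hlapp, hw2]
    have hlem : ψ ≤ m := hmax.2 hψs hle
    have hpm : p ∈ m.domain := by
      refine hlem.1 ?_
      refine ⟨(0, 1), ?_⟩
      rw [hπapp]
      simp
    exact hp hpm
  -- extract the retraction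
  refine ⟨m.toFun.comp (LinearMap.codRestrict m.domain LinearMap.id
    (fun x => by rw [htop]; trivial)), fun z => ?_⟩
  exact hms.2.1 z _
end P6
theorem stmt14 (R : Type u) [Ring R] (E : Type u) [AddCommGroup E] [Module R E]
    (J : Type u) (hJ : Cardinal.mk J = max (Cardinal.mk R) Cardinal.aleph0) :
    -- `E` is Σ-RD-injective, i.e. `E^(I)` is RD-injective for every set `I`,
    -- iff `E^(κ)` is RD-injective, where `κ = card R + ℵ₀`
    (∀ I : Type u, RDInjective R (DirectSum I fun _ => E)) ↔
      RDInjective R (DirectSum J fun _ => E) := by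
  constructor
  · intro h
    exact h J
  · intro hEJ I
    haveI hinf : Infinite J := by
      rw [Cardinal.infinite_iff, hJ]
      exact le_max_right _ _
    classical
    obtain ⟨j₀⟩ : Nonempty J := inferInstance
    have hE : RDInjective R E := rdInjective_of_retract hEJ
      (DirectSum.lof R J (fun _ => E) j₀) (DirectSum.component R J (fun _ => E) j₀)
      (fun x => DirectSum.component.lof_self (R := R) (ι := J) (M := fun _ => E) j₀ x)
    have hdcc : SolDCC R E := solDCC_of_rdInjective hEJ
    have hprod : RDInjective R (I → E) := rdInjective_pi hE I
    obtain ⟨ρ, hρ⟩ := exists_retraction hdcc I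
    intro A B _ _ _ _ f hf g
    obtain ⟨H, hH⟩ := hprod A B f hf ((incl R E I).comp g)
    refine ⟨ρ.comp H, ?_⟩
    ext a
    have := LinearMap.congr_fun hH a
    simp only [LinearMap.comp_apply] at this ⊢
    rw [this, hρ]
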